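/- Let θ* ≈ 0.2633155390 be the maximizer on [0, π/6] of the function f(θ) = (π/6 − θ + sin(2θ)/2) / ((1 + cos θ)²/√3). Then f(θ*) ≈ 0.2293647316, i.e., there exists θ ∈ [0, π/6] with f(θ) > 0.2293647, and f(θ) < 0.2293648 for all θ ∈ [0, π/6]. -/

import Mathlib

open Real Set

/-- The covered-fraction function from Croft's construction for one color. -/
noncomputable def croftFrac (θ : ℝ) : ℝ :=
  (π / 6 - θ + Real.sin (2 * θ) / 2) / ((1 + Real.cos θ) ^ 2 / Real.sqrt 3)

/-! ### Auxiliary monotonicity helper -/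

lemma taylor_aux {D D' : ℝ → ℝ} (h : ∀ t, HasDerivAt D (D' t) t)
    (h' : ∀ t, 0 ≤ t → 0 ≤ D' t) {x : ℝ} (hx : 0 ≤ x) : D 0 ≤ D x := by
  have hm : MonotoneOn D (Set.Ici 0) := by
    apply monotoneOn_of_deriv_nonneg (convex_Ici 0)
    · exact fun t _ => (h t).continuousAt.continuousWithinAt
    · exact fun t _ => (h t).differentiableAt.differentiableWithinAt
    · intro t ht
      rw [interior_Ici] at ht
      rw [(h t).deriv]
      exact h' t (le_of_lt ht)
  exact hm self_mem_Ici hx hx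

/-! ### Taylor bounds for sin and cos -/

lemma my_sin_ge3 {x : ℝ} (hx : 0 ≤ x) : x - x^3/6 ≤ Real.sin x := by
  have h := taylor_aux (D := fun t => Real.sin t - (t - t^3/6))
    (D' := fun t => Real.cos t - (1 - t^2/2)) (fun t => by
      have h1 := (Real.hasDerivAt_sin t).sub
        ((hasDerivAt_id t).sub ((hasDerivAt_pow 3 t).div_const 6))
      refine h1.congr_deriv ?_
      push_cast; ring)
    (fun t _ => by nlinarith [Real.one_sub_sq_div_two_le_cos (x := t)]) hx
  simp at h; linarith

lemma my_cos_le4 {x : ℝ} (hx : 0 ≤ x) : Real.cos x ≤ 1 - x^2/2 + x^4/24 := by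
  have h := taylor_aux (D := fun t => (1 - t^2/2 + t^4/24) - Real.cos t)
    (D' := fun t => (-t + t^3/6) + Real.sin t) (fun t => by
      have h1 := (((hasDerivAt_const t (1:ℝ)).sub ((hasDerivAt_pow 2 t).div_const 2)).add
        ((hasDerivAt_pow 4 t).div_const 24)).sub (Real.hasDerivAt_cos t)
      refine h1.congr_deriv ?_
      push_cast; ring)
    (fun t ht => by
      rcases le_or_gt 0 t with h0 | h0
      · nlinarith [my_sin_ge3 h0]
      · linarith) hx
  simp at h; linarith

lemma my_sin_le5 {x : ℝ} (hx : 0 ≤ x) : Real.sin x ≤ x - x^3/6 + x^5/120 := by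
  have h := taylor_aux (D := fun t => (t - t^3/6 + t^5/120) - Real.sin t)
    (D' := fun t => (1 - t^2/2 + t^4/24) - Real.cos t) (fun t => by
      have h1 := (((hasDerivAt_id t).sub ((hasDerivAt_pow 3 t).div_const 6)).add
        ((hasDerivAt_pow 5 t).div_const 120)).sub (Real.hasDerivAt_sin t)
      refine h1.congr_deriv ?_
      push_cast; ring)
    (fun t ht => by nlinarith [my_cos_le4 ht]) hx
  simp at h; linarith

lemma my_cos_ge6 {x : ℝ} (hx : 0 ≤ x) : 1 - x^2/2 + x^4/24 - x^6/720 ≤ Real.cos x := by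
  have h := taylor_aux (D := fun t => Real.cos t - (1 - t^2/2 + t^4/24 - t^6/720))
    (D' := fun t => -Real.sin t - (-t + t^3/6 - t^5/120)) (fun t => by
      have h1 := (Real.hasDerivAt_cos t).sub
        ((((hasDerivAt_const t (1:ℝ)).sub ((hasDerivAt_pow 2 t).div_const 2)).add
          ((hasDerivAt_pow 4 t).div_const 24)).sub ((hasDerivAt_pow 6 t).div_const 720))
      refine h1.congr_deriv ?_
      push_cast; ring)
    (fun t ht => by nlinarith [my_sin_le5 ht]) hx
  simp at h; linarith

lemma my_sin_ge7 {x : ℝ} (hx : 0 ≤ x) :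
    x - x^3/6 + x^5/120 - x^7/5040 ≤ Real.sin x := by
  have h := taylor_aux (D := fun t => Real.sin t - (t - t^3/6 + t^5/120 - t^7/5040))
    (D' := fun t => Real.cos t - (1 - t^2/2 + t^4/24 - t^6/720)) (fun t => by
      have h1 := (Real.hasDerivAt_sin t).sub
        ((((hasDerivAt_id t).sub ((hasDerivAt_pow 3 t).div_const 6)).add
          ((hasDerivAt_pow 5 t).div_const 120)).sub ((hasDerivAt_pow 7 t).div_const 5040))
      refine h1.congr_deriv ?_
      push_cast; ring)
    (fun t ht => by nlinarith [my_cos_ge6 ht]) hx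
  simp at h; linarith

lemma my_cos_le8 {x : ℝ} (hx : 0 ≤ x) :
    Real.cos x ≤ 1 - x^2/2 + x^4/24 - x^6/720 + x^8/40320 := by
  have h := taylor_aux (D := fun t => (1 - t^2/2 + t^4/24 - t^6/720 + t^8/40320) - Real.cos t)
    (D' := fun t => (-t + t^3/6 - t^5/120 + t^7/5040) + Real.sin t) (fun t => by
      have h1 := (((((hasDerivAt_const t (1:ℝ)).sub ((hasDerivAt_pow 2 t).div_const 2)).add
        ((hasDerivAt_pow 4 t).div_const 24)).sub ((hasDerivAt_pow 6 t).div_const 720)).add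
        ((hasDerivAt_pow 8 t).div_const 40320)).sub (Real.hasDerivAt_cos t)
      refine h1.congr_deriv ?_
      push_cast; ring)
    (fun t ht => by nlinarith [my_sin_ge7 ht]) hx
  simp at h; linarith

lemma my_sin_le9 {x : ℝ} (hx : 0 ≤ x) :
    Real.sin x ≤ x - x^3/6 + x^5/120 - x^7/5040 + x^9/362880 := by
  have h := taylor_aux (D := fun t => (t - t^3/6 + t^5/120 - t^7/5040 + t^9/362880) - Real.sin t)
    (D' := fun t => (1 - t^2/2 + t^4/24 - t^6/720 + t^8/40320) - Real.cos t) (fun t => by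
      have h1 := (((((hasDerivAt_id t).sub ((hasDerivAt_pow 3 t).div_const 6)).add
        ((hasDerivAt_pow 5 t).div_const 120)).sub ((hasDerivAt_pow 7 t).div_const 5040)).add
        ((hasDerivAt_pow 9 t).div_const 362880)).sub (Real.hasDerivAt_sin t)
      refine h1.congr_deriv ?_
      push_cast; ring)
    (fun t ht => by nlinarith [my_cos_le8 ht]) hx
  simp at h; linarith

noncomputable def Fc (θ : ℝ) : ℝ :=
  π / 6 - θ + Real.sin (2 * θ) / 2 - 0.2293648 * ((1 + Real.cos θ) ^ 2 / Real.sqrt 3)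

noncomputable def Fc' (θ : ℝ) : ℝ :=
  -1 + Real.cos (2 * θ) + 0.2293648 * (2 * ((1 + Real.cos θ) * Real.sin θ) / Real.sqrt 3)

noncomputable def Fc'' (θ : ℝ) : ℝ :=
  -(2 * Real.sin (2 * θ)) +
    0.2293648 * (2 * (Real.cos θ + Real.cos θ ^ 2 - Real.sin θ ^ 2) / Real.sqrt 3)

lemma hasDerivAt_Fc (t : ℝ) : HasDerivAt Fc (Fc' t) t := by
  have h1 : HasDerivAt (fun θ : ℝ => Real.sin (2 * θ)) (Real.cos (2 * t) * 2) t := by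
    simpa [Function.comp_def] using (Real.hasDerivAt_sin (2 * t)).comp t ((hasDerivAt_id t).const_mul 2)
  have h2 : HasDerivAt (fun θ : ℝ => (1 + Real.cos θ) ^ 2)
      (2 * (1 + Real.cos t) ^ 1 * (-Real.sin t)) t := by
    simpa using ((Real.hasDerivAt_cos t).const_add 1).fun_pow 2
  have h3 := (((hasDerivAt_const t (π / 6)).sub (hasDerivAt_id t)).add (h1.div_const 2)).sub
    (((h2.div_const (Real.sqrt 3)).const_mul (0.2293648 : ℝ)))
  refine h3.congr_deriv ?_
  unfold Fc'
  ring

lemma hasDerivAt_Fc' (t : ℝ) : HasDerivAt Fc' (Fc'' t) t := by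
  have h1 : HasDerivAt (fun θ : ℝ => Real.cos (2 * θ)) (-Real.sin (2 * t) * 2) t := by
    simpa [Function.comp_def] using (Real.hasDerivAt_cos (2 * t)).comp t ((hasDerivAt_id t).const_mul 2)
  have h2 : HasDerivAt (fun θ : ℝ => 2 * ((1 + Real.cos θ) * Real.sin θ))
      (2 * ((-Real.sin t) * Real.sin t + (1 + Real.cos t) * Real.cos t)) t :=
    (((Real.hasDerivAt_cos t).const_add 1).mul (Real.hasDerivAt_sin t)).const_mul (2:ℝ)
  have h3 := ((hasDerivAt_const t (-1:ℝ)).add h1).add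
    (((h2.div_const (Real.sqrt 3)).const_mul (0.2293648 : ℝ)))
  refine h3.congr_deriv ?_
  unfold Fc''
  ring

lemma sqrt3_bounds : (1.7320508075 : ℝ) ≤ Real.sqrt 3 ∧ Real.sqrt 3 ≤ 1.7320508076 := by
  have h1 : Real.sqrt 3 ^ 2 = 3 := Real.sq_sqrt (by norm_num)
  have h2 := Real.sqrt_nonneg 3
  constructor <;> nlinarith

/-! ### Numeric bounds at θ₀ = 0.26331554 -/

lemma sin_t0_lb : (0.2602832376 : ℝ) ≤ Real.sin 0.26331554 := by
  refine le_trans ?_ (my_sin_ge7 (by norm_num : (0:ℝ) ≤ 0.26331554)); norm_num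

lemma sin_t0_ub : Real.sin 0.26331554 ≤ (0.2602832377 : ℝ) := by
  refine le_trans (my_sin_le9 (by norm_num : (0:ℝ) ≤ 0.26331554)) ?_; norm_num

lemma cos_t0_lb : (0.9655323066 : ℝ) ≤ Real.cos 0.26331554 := by
  refine le_trans ?_ (my_cos_ge6 (by norm_num : (0:ℝ) ≤ 0.26331554)); norm_num

lemma cos_t0_ub : Real.cos 0.26331554 ≤ (0.9655323072 : ℝ) := by
  refine le_trans (my_cos_le8 (by norm_num : (0:ℝ) ≤ 0.26331554)) ?_; norm_num

lemma A_t0_lb : (2.230487253 : ℝ) ≤ (1 + Real.cos 0.26331554) ^ 2 / Real.sqrt 3 := by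
  have h1 := cos_t0_lb
  have h2 := sqrt3_bounds
  rw [le_div_iff₀ (Real.sqrt_pos.mpr (by norm_num))]
  nlinarith [h2.1, h2.2, h1]

lemma A_t0_ub : (1 + Real.cos 0.26331554) ^ 2 / Real.sqrt 3 ≤ (2.230487255 : ℝ) := by
  have h1 := cos_t0_ub
  have h1' := cos_t0_lb
  have h2 := sqrt3_bounds
  rw [div_le_iff₀ (Real.sqrt_pos.mpr (by norm_num))]
  nlinarith [h2.1, h2.2, h1, h1']

lemma B_t0_lb : (0.590739151 : ℝ) ≤ 2 * ((1 + Real.cos 0.26331554) * Real.sin 0.26331554) / Real.sqrt 3 := by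
  have h1 := cos_t0_lb
  have h2 := sin_t0_lb
  have h3 := sqrt3_bounds
  rw [le_div_iff₀ (Real.sqrt_pos.mpr (by norm_num))]
  nlinarith [h3.1, h3.2]

lemma B_t0_ub : 2 * ((1 + Real.cos 0.26331554) * Real.sin 0.26331554) / Real.sqrt 3 ≤ (0.590739153 : ℝ) := by
  have h1 := cos_t0_ub
  have h1' := cos_t0_lb
  have h2 := sin_t0_ub
  have h2' := sin_t0_lb
  have h3 := sqrt3_bounds
  rw [div_le_iff₀ (Real.sqrt_pos.mpr (by norm_num))]
  nlinarith [h3.1, h3.2]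

lemma Fc_t0_neg : Fc 0.26331554 ≤ -0.00000014 := by
  unfold Fc
  rw [Real.sin_two_mul]
  have hsc : 2 * Real.sin 0.26331554 * Real.cos 0.26331554 / 2
      ≤ 0.2602832377 * 0.9655323072 := by
    have := mul_le_mul sin_t0_ub cos_t0_ub (le_trans (by norm_num) cos_t0_lb)
      (by norm_num)
    linarith
  have hA := A_t0_lb
  have hπ : π < 3.14159265359 := lt_trans Real.pi_lt_d20 (by norm_num)
  nlinarith [hA, hsc, hπ]

lemma Fc'_t0_nonneg : 0 ≤ Fc' 0.26331554 := by
  unfold Fc'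
  rw [Real.cos_two_mul]
  have hB := B_t0_lb
  have hc := cos_t0_lb
  nlinarith [hB, hc]

lemma Fc'_t0_ub : Fc' 0.26331554 ≤ 0.000000041 := by
  unfold Fc'
  rw [Real.cos_two_mul]
  have hB := B_t0_ub
  have hc := cos_t0_ub
  have hc' := cos_t0_lb
  nlinarith [hB, hc, hc']

/-! ### Negativity of the second derivative on (0.2, π/6) -/

lemma Fc''_neg : ∀ t ∈ Ioo (0.2 : ℝ) (π / 6), Fc'' t < 0 := by
  intro t ht
  obtain ⟨ht1, ht2⟩ := ht
  have hπ : π < 3.141593 := Real.pi_lt_d6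
  have ht2' : t < 0.5235989 := by linarith
  have h0 : (0:ℝ) ≤ 2 * t := by linarith
  have hsin : (2*t) - (2*t)^3/6 ≤ Real.sin (2*t) := my_sin_ge3 h0
  have hX : Real.cos t + Real.cos t ^ 2 - Real.sin t ^ 2 ≤ 2 := by
    nlinarith [Real.cos_le_one t, Real.neg_one_le_cos t, sq_nonneg (Real.sin t)]
  have h3 := sqrt3_bounds
  have hs3pos : (0:ℝ) < Real.sqrt 3 := Real.sqrt_pos.mpr (by norm_num)
  have hdiv : 2 * (Real.cos t + Real.cos t ^ 2 - Real.sin t ^ 2) / Real.sqrt 3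
      ≤ 4 / 1.7320508075 := by
    have h1 : 2 * (Real.cos t + Real.cos t ^ 2 - Real.sin t ^ 2) / Real.sqrt 3
        ≤ 4 / Real.sqrt 3 := (div_le_div_iff_of_pos_right hs3pos).mpr (by linarith)
    refine h1.trans ?_
    rw [div_le_div_iff₀ hs3pos (by norm_num)]
    nlinarith [h3.1]
  unfold Fc''
  nlinarith [hsin, hdiv, mul_nonneg (sub_nonneg.mpr ht1.le) (sub_nonneg.mpr ht2'.le)]

/-! ### Tangent line bound on [0.2, π/6] -/

lemma t0_mem : (0.26331554 : ℝ) ∈ Icc (0.2 : ℝ) (π / 6) := by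
  constructor
  · norm_num
  · have := Real.pi_gt_d2; linarith

lemma Fc_cont : ∀ s : Set ℝ, ContinuousOn Fc s :=
  fun _ => fun t _ => (hasDerivAt_Fc t).continuousAt.continuousWithinAt

lemma Fc'_anti : StrictAntiOn Fc' (Icc (0.2 : ℝ) (π / 6)) := by
  apply strictAntiOn_of_deriv_neg (convex_Icc _ _)
    (fun t _ => (hasDerivAt_Fc' t).continuousAt.continuousWithinAt)
  intro t ht
  rw [interior_Icc] at ht
  rw [(hasDerivAt_Fc' t).deriv]
  exact Fc''_neg t ht

lemma tangent_bound : ∀ θ ∈ Icc (0.2 : ℝ) (π / 6),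
    Fc θ ≤ Fc 0.26331554 + Fc' 0.26331554 * (θ - 0.26331554) := by
  intro θ hθ
  set t0 : ℝ := 0.26331554 with ht0def
  have ht0 := t0_mem
  rcases lt_trichotomy θ t0 with h | h | h
  · obtain ⟨ξ, hξ, hslope⟩ := exists_hasDerivAt_eq_slope Fc Fc' h (Fc_cont _)
      (fun x _ => hasDerivAt_Fc x)
    have hξmem : ξ ∈ Icc (0.2:ℝ) (π/6) := ⟨le_trans hθ.1 hξ.1.le, le_trans hξ.2.le ht0.2⟩
    have hlt : Fc' t0 < Fc' ξ := Fc'_anti hξmem ht0 hξ.2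
    have hpos : (0:ℝ) < t0 - θ := by linarith
    rw [eq_div_iff (by linarith : t0 - θ ≠ 0)] at hslope
    nlinarith [hslope, hlt, hpos]
  · rw [h]; simp
  · obtain ⟨ξ, hξ, hslope⟩ := exists_hasDerivAt_eq_slope Fc Fc' h (Fc_cont _)
      (fun x _ => hasDerivAt_Fc x)
    have hξmem : ξ ∈ Icc (0.2:ℝ) (π/6) := ⟨le_trans ht0.1 hξ.1.le, le_trans hξ.2.le hθ.2⟩
    have hlt : Fc' ξ < Fc' t0 := Fc'_anti ht0 hξmem hξ.1
    have hpos : (0:ℝ) < θ - t0 := by linarith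
    rw [eq_div_iff (by linarith : θ - t0 ≠ 0)] at hslope
    nlinarith [hslope, hlt, hpos]

/-! ### Main negativity lemma -/

lemma Fc_neg : ∀ θ ∈ Icc (0 : ℝ) (π / 6), Fc θ < 0 := by
  intro θ hθ
  obtain ⟨hθ0, hθπ⟩ := hθ
  rcases le_or_gt θ 0.2 with hcase | hcase
  · -- polynomial bound on [0, 0.2]
    have h0 : (0:ℝ) ≤ 2 * θ := by linarith
    have hsin : Real.sin (2*θ) ≤ (2*θ) - (2*θ)^3/6 + (2*θ)^5/120 := my_sin_le5 h0
    have hcos : 1 - θ^2/2 ≤ Real.cos θ := Real.one_sub_sq_div_two_le_cos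
    have h3 := sqrt3_bounds
    have hs3pos : (0:ℝ) < Real.sqrt 3 := Real.sqrt_pos.mpr (by norm_num)
    have hθ2 : θ^2 ≤ 0.04 := by nlinarith
    have hsq : (2 - θ^2/2)^2 ≤ (1 + Real.cos θ)^2 := by
      nlinarith [mul_nonneg (by linarith : (0:ℝ) ≤ (1 + Real.cos θ) - (2 - θ^2/2))
        (by linarith : (0:ℝ) ≤ (1 + Real.cos θ) + (2 - θ^2/2))]
    have hA : (2 - θ^2/2)^2 / 1.7320508076 ≤ (1 + Real.cos θ)^2 / Real.sqrt 3 :=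
      div_le_div₀ (sq_nonneg _) hsq hs3pos h3.2
    have hπ : π < 3.141593 := Real.pi_lt_d6
    have hkey : π/6 - θ + ((2*θ) - (2*θ)^3/6 + (2*θ)^5/120)/2
        < 0.2293648 * ((2 - θ^2/2)^2 / 1.7320508076) := by
      rw [mul_div_assoc', lt_div_iff₀ (by norm_num : (0:ℝ) < 1.7320508076), mul_comm]
      nlinarith [mul_nonneg hθ0 hθ0, mul_nonneg (mul_nonneg hθ0 hθ0) hθ0,
        mul_nonneg (sub_nonneg.mpr hcase) hθ0,
        mul_nonneg (mul_nonneg (sub_nonneg.mpr hcase) hθ0) hθ0,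
        mul_nonneg (mul_nonneg (mul_nonneg (sub_nonneg.mpr hcase) hθ0) hθ0) hθ0,
        mul_nonneg (mul_nonneg (mul_nonneg (mul_nonneg (sub_nonneg.mpr hcase) hθ0) hθ0) hθ0) hθ0,
        mul_nonneg (mul_nonneg (sub_nonneg.mpr hcase) (sub_nonneg.mpr hcase)) hθ0]
    unfold Fc
    have hmono : 0.2293648 * ((2 - θ^2/2)^2 / 1.7320508076)
        ≤ 0.2293648 * ((1 + Real.cos θ)^2 / Real.sqrt 3) := by linarith
    linarith
  · -- tangent bound on [0.2, π/6]
    have hmem : θ ∈ Icc (0.2:ℝ) (π/6) := ⟨hcase.le, hθπ⟩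
    have htan := tangent_bound θ hmem
    have hF0 := Fc_t0_neg
    have hF1 := Fc'_t0_nonneg
    have hF1' := Fc'_t0_ub
    have hπ : π < 3.14159265359 := lt_trans Real.pi_lt_d20 (by norm_num)
    rcases le_or_gt θ 0.26331554 with hle | hgt
    · have : Fc' 0.26331554 * (θ - 0.26331554) ≤ 0 :=
        mul_nonpos_of_nonneg_of_nonpos hF1 (by linarith)
      linarith
    · have hub : θ - 0.26331554 ≤ 0.2602833 := by linarith
      have : Fc' 0.26331554 * (θ - 0.26331554) ≤ 0.000000041 * 0.2602833 :=
        mul_le_mul hF1' hub (by linarith) (by norm_num)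
      linarith

/-! ### The main theorem -/

theorem croft_one_color_max :
    (∃ θ ∈ Set.Icc (0 : ℝ) (π / 6), croftFrac θ > 0.2293647) ∧
    (∀ θ ∈ Set.Icc (0 : ℝ) (π / 6), croftFrac θ < 0.2293648) := by
  constructor
  · refine ⟨0.26331554, ⟨by norm_num, ?_⟩, ?_⟩
    · have := Real.pi_gt_d2; linarith
    · have hApos : (0:ℝ) < (1 + Real.cos 0.26331554) ^ 2 / Real.sqrt 3 := by
        have := cos_t0_lb
        apply div_pos (by nlinarith) (Real.sqrt_pos.mpr (by norm_num))
      rw [croftFrac, gt_iff_lt, lt_div_iff₀ hApos]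
      rw [Real.sin_two_mul]
      have hsc : (0.2602832376 : ℝ) * 0.9655323066 ≤ Real.sin 0.26331554 * Real.cos 0.26331554 :=
        mul_le_mul sin_t0_lb cos_t0_lb (by norm_num) (le_trans (by norm_num) sin_t0_lb)
      have hA := A_t0_ub
      have hπ : (3.14159265358 : ℝ) < π := lt_trans (by norm_num) Real.pi_gt_d20
      nlinarith [hA, hsc, hπ]
  · intro θ hθ
    have hF := Fc_neg θ hθ
    have hcosnn : (0:ℝ) ≤ Real.cos θ := by
      apply Real.cos_nonneg_of_mem_Icc
      constructor
      · have := Real.pi_pos; linarith [hθ.1]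
      · have := Real.pi_pos; linarith [hθ.2]
    have hApos : (0:ℝ) < (1 + Real.cos θ) ^ 2 / Real.sqrt 3 := by
      apply div_pos (by nlinarith) (Real.sqrt_pos.mpr (by norm_num))
    rw [croftFrac, div_lt_iff₀ hApos]
    unfold Fc at hF
    linarith
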